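/- For two positive semi-definite matrices Σ₁, Σ₂ ∈ ℝ^{n×n}, the trace of Σ₁^{1/2} Σ₂^{1/2} is nonnegative and bounded above by the trace of (Σ₁^{1/2} Σ₂ Σ₁^{1/2})^{1/2}. -/

import Mathlib

open Matrix

open scoped ComplexOrder in
/-- The positive semidefinite square root of a positive semidefinite matrix
(the definition of `Matrix.PosSemidef.sqrt` in Mathlib of December 2024, since removed). -/
noncomputable def Matrix.PosSemidef.sqrt {n 𝕜 : Type*} [Fintype n] [DecidableEq n] [RCLike 𝕜]
    {A : Matrix n n 𝕜} (hA : A.PosSemidef) : Matrix n n 𝕜 :=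
  hA.1.eigenvectorUnitary.1 * diagonal ((↑) ∘ (Real.sqrt ·) ∘ hA.1.eigenvalues) *
  (star hA.1.eigenvectorUnitary : Matrix n n 𝕜)

lemma Matrix.IsHermitian.star_mul_self_mul_eq_diagonal {n 𝕜 : Type*} [Fintype n] [DecidableEq n]
    [RCLike 𝕜] {A : Matrix n n 𝕜} (hA : A.IsHermitian) :
    (star hA.eigenvectorUnitary : Matrix n n 𝕜) * A * hA.eigenvectorUnitary.1 =
      diagonal (RCLike.ofReal ∘ hA.eigenvalues) := by
  have := hA.conjStarAlgAut_star_eigenvectorUnitary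
  simpa [Unitary.conjStarAlgAut_apply] using this

open scoped ComplexOrder in
lemma Matrix.PosSemidef.posSemidef_sqrt {n 𝕜 : Type*} [Fintype n] [DecidableEq n] [RCLike 𝕜]
    {A : Matrix n n 𝕜} (hA : A.PosSemidef) : hA.sqrt.PosSemidef := by
  have hD : (diagonal ((↑) ∘ (Real.sqrt ·) ∘ hA.1.eigenvalues) : Matrix n n 𝕜).PosSemidef := by
    apply PosSemidef.diagonal
    intro i
    simp only [Pi.zero_apply, Function.comp_apply]
    exact RCLike.ofReal_nonneg.mpr (Real.sqrt_nonneg _)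
  have := hD.mul_mul_conjTranspose_same (hA.1.eigenvectorUnitary.1)
  rw [Matrix.PosSemidef.sqrt, Matrix.star_eq_conjTranspose]
  exact this

open scoped ComplexOrder in
lemma Matrix.PosSemidef.sqrt_mul_self {n 𝕜 : Type*} [Fintype n] [DecidableEq n] [RCLike 𝕜]
    {A : Matrix n n 𝕜} (hA : A.PosSemidef) : hA.sqrt * hA.sqrt = A := by
  set U : Matrix n n 𝕜 := hA.1.eigenvectorUnitary.1 with hU
  have hUU' : (star hA.1.eigenvectorUnitary : Matrix n n 𝕜) * U = 1 :=
    Unitary.coe_star_mul_self _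
  have hDD : (diagonal ((↑) ∘ (Real.sqrt ·) ∘ hA.1.eigenvalues) : Matrix n n 𝕜) *
      diagonal ((↑) ∘ (Real.sqrt ·) ∘ hA.1.eigenvalues) =
      diagonal (RCLike.ofReal ∘ hA.1.eigenvalues) := by
    rw [diagonal_mul_diagonal]
    congr 1
    funext i
    simp only [Function.comp_apply]
    rw [← RCLike.ofReal_mul, Real.mul_self_sqrt (hA.eigenvalues_nonneg i)]
  rw [Matrix.PosSemidef.sqrt]
  calc U * diagonal ((↑) ∘ (Real.sqrt ·) ∘ hA.1.eigenvalues) *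
        (star hA.1.eigenvectorUnitary : Matrix n n 𝕜) *
      (U * diagonal ((↑) ∘ (Real.sqrt ·) ∘ hA.1.eigenvalues) *
        (star hA.1.eigenvectorUnitary : Matrix n n 𝕜))
      = U * diagonal ((↑) ∘ (Real.sqrt ·) ∘ hA.1.eigenvalues) *
        ((star hA.1.eigenvectorUnitary : Matrix n n 𝕜) * U) *
        diagonal ((↑) ∘ (Real.sqrt ·) ∘ hA.1.eigenvalues) *
        (star hA.1.eigenvectorUnitary : Matrix n n 𝕜) := by simp only [Matrix.mul_assoc]
    _ = U * diagonal (RCLike.ofReal ∘ hA.1.eigenvalues) *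
        (star hA.1.eigenvectorUnitary : Matrix n n 𝕜) := by
        rw [hUU', Matrix.mul_one, Matrix.mul_assoc U, hDD]
    _ = A := by
        conv_rhs => rw [hA.1.spectral_theorem, Unitary.conjStarAlgAut_apply]

lemma psd_trace_nonneg {n : ℕ} {P : Matrix (Fin n) (Fin n) ℝ} (hP : P.PosSemidef) :
    0 ≤ P.trace := by
  rw [Matrix.trace]
  apply Finset.sum_nonneg
  intro i _
  have := hP.diag_nonneg (i := i)
  simpa [dotProduct, Matrix.mulVec, Pi.single_apply, Finset.sum_ite_eq,
    Matrix.diag] using this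

lemma trace_le_trace_sqrt {n : ℕ} {M P : Matrix (Fin n) (Fin n) ℝ}
    (hMP : M * Mᵀ = P) (hP : P.PosSemidef) : M.trace ≤ hP.sqrt.trace := by
  classical
  subst hMP
  set U : Matrix (Fin n) (Fin n) ℝ := (hP.1.eigenvectorUnitary : Matrix (Fin n) (Fin n) ℝ)
    with hU
  have hUU : U * star U = 1 := (Matrix.mem_unitaryGroup_iff).mp hP.1.eigenvectorUnitary.2
  have hUU' : star U * U = 1 := (Matrix.mem_unitaryGroup_iff').mp hP.1.eigenvectorUnitary.2
  set N : Matrix (Fin n) (Fin n) ℝ := star U * M * U with hNdef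
  have htrN : N.trace = M.trace := by
    rw [hNdef, Matrix.trace_mul_cycle, hUU, Matrix.one_mul]
  have hNN : N * Nᴴ = diagonal (RCLike.ofReal ∘ hP.1.eigenvalues) := by
    have h1 : Nᴴ = star U * Mᴴ * U := by
      simp [hNdef, Matrix.conjTranspose_mul, Matrix.mul_assoc,
        Matrix.star_eq_conjTranspose, Matrix.conjTranspose_eq_transpose_of_trivial]
    rw [h1, ← hP.1.star_mul_self_mul_eq_diagonal]
    have hMH : Mᴴ = Mᵀ := Matrix.conjTranspose_eq_transpose_of_trivial M
    calc star U * M * U * (star U * Mᴴ * U)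
        = star U * M * (U * star U) * (Mᴴ * U) := by
          simp only [Matrix.mul_assoc]
      _ = star U * (M * Mᵀ) * U := by
          rw [hUU, Matrix.mul_one, hMH]; simp only [Matrix.mul_assoc]
  have hdiag : ∀ i, N i i ≤ Real.sqrt (hP.1.eigenvalues i) := by
    intro i
    have h2 : ∑ j, N i j * N i j = hP.1.eigenvalues i := by
      have := congrArg (fun A => A i i) hNN
      simpa [Matrix.mul_apply, Matrix.conjTranspose_apply, Matrix.diagonal_apply] using this
    have h3 : N i i ^ 2 ≤ hP.1.eigenvalues i := by
      rw [← h2, pow_two]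
      exact Finset.single_le_sum (f := fun j => N i j * N i j)
        (fun j _ => mul_self_nonneg _) (Finset.mem_univ i)
    calc N i i ≤ |N i i| := le_abs_self _
      _ = Real.sqrt (N i i ^ 2) := (Real.sqrt_sq_eq_abs _).symm
      _ ≤ Real.sqrt (hP.1.eigenvalues i) := Real.sqrt_le_sqrt h3
  have htrsqrt : hP.sqrt.trace = ∑ i, Real.sqrt (hP.1.eigenvalues i) := by
    rw [Matrix.PosSemidef.sqrt, Matrix.trace_mul_cycle,
      (Matrix.mem_unitaryGroup_iff').mp hP.1.eigenvectorUnitary.2,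
      Matrix.one_mul, Matrix.trace_diagonal]
    simp
  rw [← htrN, htrsqrt, Matrix.trace]
  exact Finset.sum_le_sum fun i _ => hdiag i

theorem trace_sqrt_mul_sqrt_nonneg_and_le {n : ℕ}
    {S₁ S₂ : Matrix (Fin n) (Fin n) ℝ}
    (h₁ : S₁.PosSemidef) (h₂ : S₂.PosSemidef)
    (hP : (h₁.sqrt * S₂ * h₁.sqrt).PosSemidef) :
    0 ≤ (h₁.sqrt * h₂.sqrt).trace ∧
      (h₁.sqrt * h₂.sqrt).trace ≤ hP.sqrt.trace := by
  have hA : (h₁.sqrt).PosSemidef := h₁.posSemidef_sqrt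
  have h1T : (h₁.sqrt)ᵀ = h₁.sqrt := by
    have := h₁.posSemidef_sqrt.1
    rwa [Matrix.IsHermitian, Matrix.conjTranspose_eq_transpose_of_trivial] at this
  have h2T : (h₂.sqrt)ᵀ = h₂.sqrt := by
    have := h₂.posSemidef_sqrt.1
    rwa [Matrix.IsHermitian, Matrix.conjTranspose_eq_transpose_of_trivial] at this
  constructor
  · have hRsym : (hA.sqrt)ᴴ = hA.sqrt := hA.posSemidef_sqrt.1
    have h1 : (h₁.sqrt * h₂.sqrt).trace = (hA.sqrt * h₂.sqrt * (hA.sqrt)ᴴ).trace := by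
      rw [hRsym]
      calc (h₁.sqrt * h₂.sqrt).trace
          = ((hA.sqrt * hA.sqrt) * h₂.sqrt).trace := by rw [hA.sqrt_mul_self]
        _ = (hA.sqrt * h₂.sqrt * hA.sqrt).trace := by
            rw [Matrix.mul_assoc, Matrix.trace_mul_comm, Matrix.mul_assoc]
    rw [h1]
    exact psd_trace_nonneg (h₂.posSemidef_sqrt.mul_mul_conjTranspose_same hA.sqrt)
  · apply trace_le_trace_sqrt
    rw [Matrix.transpose_mul, h1T, h2T]
    calc h₁.sqrt * h₂.sqrt * (h₂.sqrt * h₁.sqrt)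
        = h₁.sqrt * (h₂.sqrt * h₂.sqrt) * h₁.sqrt := by simp only [Matrix.mul_assoc]
      _ = h₁.sqrt * S₂ * h₁.sqrt := by rw [h₂.sqrt_mul_self]
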